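/- Let φ : [0,1] → ℝ be C³, negative on (0,1), with φ'' > 0 on (0,1), symmetric about 1/2 (φ(x)=φ(1−x)), with φ''' < 0 on (0,1/2) and φ''' > 0 on (1/2,1). Then for any c > 1, the function M(x) = φ(x)/(x−c) has at most two points x ∈ (0,1) at which M''(x) = 0. -/

import Mathlib

open Real Set

theorem at_most_two_inflections
    (φ : ℝ → ℝ)
    (hφ : ContDiffOn ℝ 3 φ (Set.Icc 0 1))
    (hneg : ∀ x ∈ Set.Ioo (0:ℝ) 1, φ x < 0)
    (hconv : ∀ x ∈ Set.Ioo (0:ℝ) 1, 0 < deriv (deriv φ) x)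
    (hsym : ∀ x ∈ Set.Icc (0:ℝ) 1, φ x = φ (1 - x))
    (h3a : ∀ x ∈ Set.Ioo (0:ℝ) (1/2), deriv (deriv (deriv φ)) x < 0)
    (h3b : ∀ x ∈ Set.Ioo (1/2:ℝ) 1, 0 < deriv (deriv (deriv φ)) x)
    (c : ℝ) (hc : 1 < c)
    (M : ℝ → ℝ) (hM : ∀ x, M x = φ x / (x - c)) :
    Set.encard {x ∈ Set.Ioo (0:ℝ) 1 | deriv (deriv M) x = 0} ≤ 2 := by
  have hMf : M = fun x => φ x / (x - c) := funext hM
  subst hMf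
  set s : Set ℝ := Set.Ioo (0:ℝ) 1 with hsdef
  have hso : IsOpen s := isOpen_Ioo
  have h1 : ContDiffOn ℝ 3 φ s := hφ.mono Set.Ioo_subset_Icc_self
  have h2 : ContDiffOn ℝ 2 (deriv φ) s := h1.deriv_of_isOpen hso (by norm_num)
  have h3 : ContDiffOn ℝ 1 (deriv (deriv φ)) s := h2.deriv_of_isOpen hso (by norm_num)
  have hd0 : ∀ x ∈ s, DifferentiableAt ℝ φ x := fun x hx =>
    (h1.differentiableOn (by norm_num)).differentiableAt (hso.mem_nhds hx)
  have hd1 : ∀ x ∈ s, DifferentiableAt ℝ (deriv φ) x := fun x hx =>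
    (h2.differentiableOn (by norm_num)).differentiableAt (hso.mem_nhds hx)
  have hd2 : ∀ x ∈ s, DifferentiableAt ℝ (deriv (deriv φ)) x := fun x hx =>
    (h3.differentiableOn (by norm_num)).differentiableAt (hso.mem_nhds hx)
  have hu : ∀ x ∈ s, x - c ≠ 0 := fun x hx => by
    have : x < c := lt_trans hx.2 hc
    linarith
  -- the key auxiliary function
  set N : ℝ → ℝ := fun x =>
    deriv (deriv φ) x * (x - c) ^ 2 - 2 * deriv φ x * (x - c) + 2 * φ x with hNdef
  -- first derivative of M on s
  have hM1 : ∀ x ∈ s, deriv (fun x => φ x / (x - c)) x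
      = (deriv φ x * (x - c) - φ x) / (x - c) ^ 2 := by
    intro x hx
    have h := ((hd0 x hx).hasDerivAt.div ((hasDerivAt_id x).sub_const c) (hu x hx))
    simpa using (show deriv (fun x => φ x / (x - c)) x = _ from h.deriv)
  -- second derivative of M on s
  have hM2 : ∀ x ∈ s, deriv (deriv (fun x => φ x / (x - c))) x = N x / (x - c) ^ 3 := by
    intro x hx
    have heq : deriv (fun x => φ x / (x - c))
        =ᶠ[nhds x] fun y => (deriv φ y * (y - c) - φ y) / (y - c) ^ 2 :=
      Filter.eventually_of_mem (hso.mem_nhds hx) hM1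
    rw [heq.deriv_eq]
    have hnum : HasDerivAt (fun y => deriv φ y * (y - c) - φ y)
        (deriv (deriv φ) x * (x - c)) x := by
      have h := ((hd1 x hx).hasDerivAt.mul ((hasDerivAt_id x).sub_const c)).sub
        (hd0 x hx).hasDerivAt
      convert h using 1; rfl; rfl; rfl; simp only [id_eq]; ring
    have hden : HasDerivAt (fun y => (y - c) ^ 2) (2 * (x - c)) x := by
      have h := ((hasDerivAt_id x).sub_const c).pow 2
      convert h using 1; rfl; rfl; rfl; simp only [id_eq]; ring
    have hden2 : (x - c) ^ 2 ≠ 0 := pow_ne_zero _ (hu x hx)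
    have h := (hnum.div hden hden2).deriv
    rw [show deriv (fun y => (deriv φ y * (y - c) - φ y) / (y - c) ^ 2) x = _ from h]
    have hc3 : (x - c) ^ 3 ≠ 0 := pow_ne_zero _ (hu x hx)
    field_simp
    ring
  -- derivative of N on s
  have hNd : ∀ x ∈ s, HasDerivAt N (deriv (deriv (deriv φ)) x * (x - c) ^ 2) x := by
    intro x hx
    have hden : HasDerivAt (fun y => (y - c) ^ 2) (2 * (x - c)) x := by
      have h := ((hasDerivAt_id x).sub_const c).pow 2
      convert h using 1; rfl; rfl; rfl; simp only [id_eq]; ring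
    have h := (((hd2 x hx).hasDerivAt.mul hden).sub
      (((hd1 x hx).hasDerivAt.const_mul 2).mul ((hasDerivAt_id x).sub_const c))).add
      ((hd0 x hx).hasDerivAt.const_mul 2)
    convert h using 1; rfl; rfl; rfl; simp only [id_eq]; ring
  -- N is strictly antitone on (0, 1/2]
  have hIoc : Set.Ioc (0:ℝ) (1/2) ⊆ s := fun x hx => ⟨hx.1, lt_of_le_of_lt hx.2 (by norm_num)⟩
  have hIco : Set.Ico (1/2:ℝ) 1 ⊆ s := fun x hx => ⟨lt_of_lt_of_le (by norm_num) hx.1, hx.2⟩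
  have hanti : StrictAntiOn N (Set.Ioc (0:ℝ) (1/2)) := by
    apply strictAntiOn_of_deriv_neg (convex_Ioc _ _)
    · exact fun x hx => ((hNd x (hIoc hx)).differentiableAt.continuousAt).continuousWithinAt
    · intro x hx
      rw [interior_Ioc] at hx
      have hsx := hIoc (Set.Ioo_subset_Ioc_self hx)
      rw [(hNd x hsx).deriv]
      have hne := hu x hsx
      have h2 : (0:ℝ) < (x - c) ^ 2 := by rcases hne.lt_or_gt with h | h <;> positivity
      exact mul_neg_of_neg_of_pos (h3a x hx) h2
  have hmono : StrictMonoOn N (Set.Ico (1/2:ℝ) 1) := by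
    apply strictMonoOn_of_deriv_pos (convex_Ico _ _)
    · exact fun x hx => ((hNd x (hIco hx)).differentiableAt.continuousAt).continuousWithinAt
    · intro x hx
      rw [interior_Ico] at hx
      rw [(hNd x (hIco (Set.Ioo_subset_Ico_self hx))).deriv]
      have hne := hu x (hIco (Set.Ioo_subset_Ico_self hx))
      have : (0:ℝ) < (x - c) ^ 2 := by
        rcases hne.lt_or_gt with h | h <;> positivity
      exact mul_pos (h3b x hx) this
  -- the zero set of M'' is contained in the zero set of N
  have hsub : {x ∈ s | deriv (deriv (fun x => φ x / (x - c))) x = 0}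
      ⊆ {x ∈ Set.Ioc (0:ℝ) (1/2) | N x = 0} ∪ {x ∈ Set.Ico (1/2:ℝ) 1 | N x = 0} := by
    intro x hx
    obtain ⟨hxs, hx0⟩ := hx
    have hNx : N x = 0 := by
      rw [hM2 x hxs] at hx0
      have hc3 : (x - c) ^ 3 ≠ 0 := pow_ne_zero _ (hu x hxs)
      exact (div_eq_zero_iff.1 hx0).resolve_right hc3
    rcases le_or_gt x (1/2) with h | h
    · exact Or.inl ⟨⟨hxs.1, h⟩, hNx⟩
    · exact Or.inr ⟨⟨le_of_lt h, hxs.2⟩, hNx⟩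
  calc Set.encard {x ∈ s | deriv (deriv (fun x => φ x / (x - c))) x = 0}
      ≤ Set.encard ({x ∈ Set.Ioc (0:ℝ) (1/2) | N x = 0} ∪ {x ∈ Set.Ico (1/2:ℝ) 1 | N x = 0}) :=
        Set.encard_mono hsub
    _ ≤ Set.encard {x ∈ Set.Ioc (0:ℝ) (1/2) | N x = 0}
        + Set.encard {x ∈ Set.Ico (1/2:ℝ) 1 | N x = 0} := Set.encard_union_le _ _
    _ ≤ 1 + 1 := by
        gcongr
        · rw [Set.encard_le_one_iff]
          intro a b ha hb
          exact hanti.injOn ha.1 hb.1 (by rw [ha.2, hb.2])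
        · rw [Set.encard_le_one_iff]
          intro a b ha hb
          exact hmono.injOn ha.1 hb.1 (by rw [ha.2, hb.2])
    _ = 2 := by norm_num
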